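/- For every integer m ≥ 1 and every complex z with Re z ≥ 0 and z ≠ 0, |S_{m+1}(z) − 1/(m·z^m) − 1/(2·z^{m+1}) − (m+1)/(12·z^{m+2})| ≤ (m+1)(m+2)(m+3) / (120·|z|^{m+3}). (Equivalently, ψ_m(z) = (−1)^{m+1} m! [1/(m z^m) + 1/(2 z^{m+1}) + (m+1)/(12 z^{m+2}) + R_m(z)] with |R_m(z)| ≤ (m+1)(m+2)(m+3)/(120 |z|^{m+3}); this is the Euler–Maclaurin expansion of the polygamma function with explicit remainder bound.) -/

import Mathlib

open Complex

/-- `S j z = ∑_{k=0}^∞ 1/(z+k)^j`, so that `ψ_m(z) = (−1)^{m+1} m! S_{m+1}(z)`. -/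
noncomputable def S (j : ℕ) (z : ℂ) : ℂ := ∑' k : ℕ, 1 / (z + k) ^ j

section EulerMaclaurinAux
open Filter

lemma key_sq {z : ℂ} (hre : 0 ≤ z.re) {t : ℝ} (ht : 0 ≤ t) :
    ‖z‖ ^ 2 + t ^ 2 ≤ ‖z + t‖ ^ 2 := by
  rw [Complex.sq_norm, Complex.sq_norm, Complex.normSq_apply, Complex.normSq_apply]
  simp only [Complex.add_re, Complex.add_im, Complex.ofReal_re, Complex.ofReal_im, add_zero]
  nlinarith [mul_nonneg hre ht]

lemma key_r_le {z : ℂ} (hre : 0 ≤ z.re) {t : ℝ} (ht : 0 ≤ t) :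
    ‖z‖ ≤ ‖z + t‖ := by
  nlinarith [key_sq hre ht, norm_nonneg z, norm_nonneg (z + t), sq_nonneg t]

lemma key_t_le {z : ℂ} (hre : 0 ≤ z.re) {t : ℝ} (ht : 0 ≤ t) :
    t ≤ ‖z + t‖ := by
  nlinarith [key_sq hre ht, norm_nonneg (z + t), sq_nonneg (‖z‖)]

lemma key_ne {z : ℂ} (hre : 0 ≤ z.re) (hz : z ≠ 0) {t : ℝ} (ht : 0 ≤ t) :
    z + t ≠ 0 := by
  intro h
  have h1 : ‖z‖ ≤ 0 := by simpa [h] using key_r_le hre ht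
  exact hz (by simpa using norm_eq_zero.mp (le_antisymm h1 (norm_nonneg z)))

lemma hasDerivAt_inv_pow {w : ℂ} {j : ℕ} {x : ℝ} (h : w + x ≠ 0) :
    HasDerivAt (fun t : ℝ => ((w + t) ^ j)⁻¹) (-(j : ℂ) * ((w + x) ^ (j + 1))⁻¹) x := by
  have h0 : HasDerivAt (fun u : ℂ => w + u) 1 (x : ℂ) := (hasDerivAt_id (x : ℂ)).const_add w
  have h1 := ((hasDerivAt_zpow (-(j : ℤ)) (w + x) (Or.inl h)).comp (x : ℂ) h0)
  have h2 := h1.comp_ofReal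
  have e1 : ((fun u : ℂ => u ^ (-(j:ℤ))) ∘ fun u : ℂ => w + u) = fun u : ℂ => (w + u) ^ (-(j:ℤ)) :=
    rfl
  rw [e1] at h2
  have e2 : (fun t : ℝ => ((w + (t:ℂ)) ^ j)⁻¹) = fun t : ℝ => (w + (t:ℂ)) ^ (-(j : ℤ)) := by
    funext t; rw [zpow_neg, zpow_natCast]
  rw [e2]
  convert h2 using 1
  rw [mul_one, zpow_sub₀ h, zpow_neg, zpow_natCast, zpow_one, div_eq_mul_inv, ← mul_inv,
    ← pow_succ]
  push_cast
  ring

lemma summable_aux {z : ℂ} (hre : 0 ≤ z.re) {j : ℕ} (hj : 2 ≤ j) :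
    Summable (fun k : ℕ => ((z + k) ^ j)⁻¹) := by
  apply Summable.of_norm_bounded_eventually_nat (g := fun k => 1 / (k : ℝ) ^ 2)
    (Real.summable_one_div_nat_pow.mpr one_lt_two)
  filter_upwards [eventually_ge_atTop 1] with k hk
  have hk1 : (1 : ℝ) ≤ (k : ℝ) := by exact_mod_cast hk
  have habs : (k : ℝ) ≤ ‖z + k‖ := by
    simpa using key_t_le hre (t := (k : ℝ)) (by positivity)
  have h1 : (k : ℝ) ^ 2 ≤ ‖z + k‖ ^ j := by
    calc (k : ℝ) ^ 2 ≤ (k : ℝ) ^ j := pow_le_pow_right₀ hk1 hj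
    _ ≤ ‖z + k‖ ^ j := pow_le_pow_left₀ (by positivity) habs j
  rw [norm_inv, norm_pow]
  rw [one_div]
  apply inv_anti₀ (by positivity)
  simpa using h1

lemma tele_hasSum {a : ℕ → ℂ} (h0 : Filter.Tendsto a Filter.atTop (nhds 0))
    (hs : Summable (fun k => ‖a k - a (k + 1)‖)) :
    HasSum (fun k => a k - a (k + 1)) (a 0) := by
  rw [hasSum_iff_tendsto_nat_of_summable_norm hs]
  have e : ∀ n, ∑ i ∈ Finset.range n, (a i - a (i + 1)) = a 0 - a n := by
    intro n; exact Finset.sum_range_sub' a n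
  simp only [e]
  simpa using tendsto_const_nhds.sub h0

lemma B3_bound {x : ℝ} (h0 : 0 ≤ x) (h1 : x ≤ 1) :
    |x ^ 3 - 3 / 2 * x ^ 2 + 1 / 2 * x| ≤ 1 / 18 := by
  rw [abs_le]
  constructor <;> nlinarith [sq_nonneg (x * (1 - x) - 1/6), mul_nonneg (mul_nonneg h0 (sub_nonneg.mpr h1)) h0, sq_nonneg x, sq_nonneg (1 - x), mul_nonneg h0 (sub_nonneg.mpr h1), sq_nonneg (x - 1/2)]

lemma hasDerivAt_ofRealC (x : ℝ) : HasDerivAt (fun t : ℝ => (t : ℂ)) 1 x :=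
  (hasDerivAt_id (x : ℂ)).comp_ofReal

lemma hasDerivAt_G (w : ℂ) (m : ℕ) (hm : 1 ≤ m) (x : ℝ) (h : w + x ≠ 0) :
    HasDerivAt (fun t : ℝ =>
      (((t:ℂ)^3 - 3/2*(t:ℂ)^2 + 1/2*(t:ℂ))/6) * (((m:ℂ)+1)*((m:ℂ)+2) * ((w+t)^(m+3))⁻¹)
      - (((t:ℂ)^2 - (t:ℂ) + 1/6)/2) * (-((m:ℂ)+1) * ((w+t)^(m+2))⁻¹)
      + ((t:ℂ) - 1/2) * ((w+t)^(m+1))⁻¹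
      + (1/(m:ℂ)) * ((w+t)^m)⁻¹)
      ((((x:ℂ)^3 - 3/2*(x:ℂ)^2 + 1/2*(x:ℂ))/6) *
        (-(((m:ℂ)+1)*((m:ℂ)+2)*((m:ℂ)+3)) * ((w+x)^(m+4))⁻¹)) x := by
  have hX := hasDerivAt_ofRealC x
  have hc3 : HasDerivAt (fun t : ℝ => (t:ℂ)^3) (3*(x:ℂ)^2) x := by
    simpa using (hasDerivAt_pow 3 (x:ℂ)).comp_ofReal
  have hc2 : HasDerivAt (fun t : ℝ => (t:ℂ)^2) (2*(x:ℂ)) x := by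
    simpa using (hasDerivAt_pow 2 (x:ℂ)).comp_ofReal
  have hT3 : HasDerivAt (fun t : ℝ => ((t:ℂ)^3 - 3/2*(t:ℂ)^2 + 1/2*(t:ℂ))/6)
      (((x:ℂ)^2 - (x:ℂ) + 1/6)/2) x := by
    have := ((hc3.sub (hc2.const_mul (3/2 : ℂ))).add (hX.const_mul (1/2:ℂ))).div_const 6
    refine this.congr_deriv (Eq.symm ?_)
    all_goals first | ring | (funext t; ring)
  have hT2 : HasDerivAt (fun t : ℝ => ((t:ℂ)^2 - (t:ℂ) + 1/6)/2) ((x:ℂ) - 1/2) x := by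
    have := ((hc2.sub hX).add_const (1/6:ℂ)).div_const 2
    refine this.congr_deriv (Eq.symm ?_)
    all_goals first | ring | (funext t; ring)
  have hT1 : HasDerivAt (fun t : ℝ => (t:ℂ) - 1/2) 1 x := hX.sub_const _
  have hP0 : HasDerivAt (fun t : ℝ => ((w+t)^(m+1))⁻¹)
      (-((m+1:ℕ):ℂ) * ((w+x)^(m+2))⁻¹) x := by
    have := hasDerivAt_inv_pow (w := w) (j := m+1) (x := x) h
    convert this using 2 <;> try omega
  have hP1 : HasDerivAt (fun t : ℝ => -((m:ℂ)+1) * ((w+t)^(m+2))⁻¹)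
      (-((m:ℂ)+1) * (-((m+2:ℕ):ℂ) * ((w+x)^(m+3))⁻¹)) x := by
    have := (hasDerivAt_inv_pow (w := w) (j := m+2) (x := x) h).const_mul (-((m:ℂ)+1))
    convert this using 3 <;> try omega
  have hP2 : HasDerivAt (fun t : ℝ => ((m:ℂ)+1)*((m:ℂ)+2) * ((w+t)^(m+3))⁻¹)
      (((m:ℂ)+1)*((m:ℂ)+2) * (-((m+3:ℕ):ℂ) * ((w+x)^(m+4))⁻¹)) x := by
    have := (hasDerivAt_inv_pow (w := w) (j := m+3) (x := x) h).const_mul (((m:ℂ)+1)*((m:ℂ)+2))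
    convert this using 3 <;> try omega
  have hPm : HasDerivAt (fun t : ℝ => (1/(m:ℂ)) * ((w+t)^m)⁻¹)
      ((1/(m:ℂ)) * (-((m:ℕ):ℂ) * ((w+x)^(m+1))⁻¹)) x :=
    (hasDerivAt_inv_pow (w := w) (j := m) (x := x) h).const_mul (1/(m:ℂ))
  have hm0 : ((m:ℂ)) ≠ 0 := by exact_mod_cast Nat.cast_ne_zero.mpr (by omega)
  have e : (1/(m:ℂ)) * (m:ℂ) = 1 := by field_simp
  have := (((hT3.mul hP2).sub (hT2.mul hP1)).add (hT1.mul hP0)).add hPm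
  refine this.congr_deriv (Eq.symm ?_)
  push_cast
  linear_combination (((w + (x:ℂ))^(m+1))⁻¹) * e

lemma interval_key (m : ℕ) (hm : 1 ≤ m) (w : ℂ) (hw : ∀ x : ℝ, 0 ≤ x → w + x ≠ 0) :
    (w ^ (m+1))⁻¹
      - (-(1/(m:ℂ)) * ((w+1) ^ m)⁻¹ - -(1/(m:ℂ)) * (w ^ m)⁻¹)
      - ((w ^ (m+1))⁻¹ - ((w+1) ^ (m+1))⁻¹) / 2
      + (-((m:ℂ)+1) * (w ^ (m+2))⁻¹ - -((m:ℂ)+1) * ((w+1) ^ (m+2))⁻¹) / 12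
    = ∫ x in (0:ℝ)..1, (((x:ℂ)^3 - 3/2*(x:ℂ)^2 + 1/2*(x:ℂ))/6) *
        (-(((m:ℂ)+1)*((m:ℂ)+2)*((m:ℂ)+3)) * ((w + x) ^ (m+4))⁻¹) := by
  have huIcc : Set.uIcc (0:ℝ) 1 = Set.Icc 0 1 := Set.uIcc_of_le zero_le_one
  have hne : ∀ x ∈ Set.uIcc (0:ℝ) 1, w + x ≠ 0 := by
    intro x hx
    rw [huIcc] at hx
    exact hw x hx.1
  have hderiv : ∀ x ∈ Set.uIcc (0:ℝ) 1, HasDerivAt (fun t : ℝ =>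
      (((t:ℂ)^3 - 3/2*(t:ℂ)^2 + 1/2*(t:ℂ))/6) * (((m:ℂ)+1)*((m:ℂ)+2) * ((w+t)^(m+3))⁻¹)
      - (((t:ℂ)^2 - (t:ℂ) + 1/6)/2) * (-((m:ℂ)+1) * ((w+t)^(m+2))⁻¹)
      + ((t:ℂ) - 1/2) * ((w+t)^(m+1))⁻¹
      + (1/(m:ℂ)) * ((w+t)^m)⁻¹)
      ((((x:ℂ)^3 - 3/2*(x:ℂ)^2 + 1/2*(x:ℂ))/6) *
        (-(((m:ℂ)+1)*((m:ℂ)+2)*((m:ℂ)+3)) * ((w+x)^(m+4))⁻¹)) x :=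
    fun x hx => hasDerivAt_G w m hm x (hne x hx)
  have hcont : ContinuousOn (fun x : ℝ => (((x:ℂ)^3 - 3/2*(x:ℂ)^2 + 1/2*(x:ℂ))/6) *
      (-(((m:ℂ)+1)*((m:ℂ)+2)*((m:ℂ)+3)) * ((w + x) ^ (m+4))⁻¹)) (Set.uIcc (0:ℝ) 1) := by
    apply ContinuousOn.mul
    · fun_prop
    · apply ContinuousOn.mul continuousOn_const
      apply ContinuousOn.inv₀
      · fun_prop
      · intro x hx
        exact pow_ne_zero _ (hne x hx)
  have hint := hcont.intervalIntegrable (μ := MeasureTheory.volume)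
  rw [intervalIntegral.integral_eq_sub_of_hasDerivAt hderiv hint]
  have hm0 : ((m:ℂ)) ≠ 0 := by exact_mod_cast Nat.cast_ne_zero.mpr (by omega)
  push_cast
  simp only [Complex.ofReal_one, Complex.ofReal_zero, add_zero]
  ring

lemma Ek_bound (m : ℕ) {z : ℂ} (hre : 0 ≤ z.re) (hz : z ≠ 0) (k : ℕ) :
    ‖∫ x in (0:ℝ)..1, (((x:ℂ)^3 - 3/2*(x:ℂ)^2 + 1/2*(x:ℂ))/6) *
        (-(((m:ℂ)+1)*((m:ℂ)+2)*((m:ℂ)+3)) * ((z + (k:ℂ) + x) ^ (m+4))⁻¹)‖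
    ≤ ∫ t in (k:ℝ)..((k:ℝ)+1), (((m:ℝ)+1)*((m:ℝ)+2)*((m:ℝ)+3)/(108 * ‖z‖ ^ m)) *
        ((‖z‖ ^ 2 + t ^ 2) ^ 2)⁻¹ := by
  set r := ‖z‖ with hrdef
  have hr : 0 < r := norm_pos_iff.mpr hz
  obtain ⟨K, hKdef⟩ : ∃ K : ℝ, K = ((m:ℝ)+1)*((m:ℝ)+2)*((m:ℝ)+3) := ⟨_, rfl⟩
  have hK : 0 < K := by rw [hKdef]; positivity
  set g : ℝ → ℝ := fun t => (K/(108 * r ^ m)) * ((r ^ 2 + t ^ 2) ^ 2)⁻¹ with hgdef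
  have hgcont : Continuous g := by
    apply continuous_const.mul
    apply Continuous.inv₀
    · fun_prop
    · intro t
      positivity
  have hgint : IntervalIntegrable (fun x : ℝ => g ((k:ℝ) + x)) MeasureTheory.volume 0 1 :=
    (hgcont.comp (continuous_const.add continuous_id)).intervalIntegrable _ _
  have step1 : ‖∫ x in (0:ℝ)..1, (((x:ℂ)^3 - 3/2*(x:ℂ)^2 + 1/2*(x:ℂ))/6) *
      (-(((m:ℂ)+1)*((m:ℂ)+2)*((m:ℂ)+3)) * ((z + (k:ℂ) + x) ^ (m+4))⁻¹)‖
      ≤ |∫ x in (0:ℝ)..1, g ((k:ℝ) + x)| := by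
    apply intervalIntegral.norm_integral_le_abs_of_norm_le _ hgint
    filter_upwards [MeasureTheory.ae_restrict_mem measurableSet_uIoc] with x hx
    rw [Set.uIoc_of_le zero_le_one] at hx
    obtain ⟨hx0, hx1⟩ := hx
    obtain ⟨t, htdef⟩ : ∃ t : ℝ, t = (k:ℝ) + x := ⟨_, rfl⟩
    have ht : 0 ≤ t := by rw [htdef]; positivity
    have e : (((x:ℂ)^3 - 3/2*(x:ℂ)^2 + 1/2*(x:ℂ))/6) *
        (-(((m:ℂ)+1)*((m:ℂ)+2)*((m:ℂ)+3)) * ((z + (k:ℂ) + x) ^ (m+4))⁻¹)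
        = Complex.ofReal ((x^3 - 3/2*x^2 + 1/2*x)/6) *
          (Complex.ofReal (-K) * ((z + (t:ℝ)) ^ (m+4))⁻¹) := by
      have hb : z + (k:ℂ) + (x:ℂ) = z + ((t:ℝ):ℂ) := by rw [htdef]; push_cast; ring
      rw [hb, hKdef]
      push_cast
      ring
    rw [e, norm_mul, norm_mul, Complex.norm_real, Complex.norm_real, norm_inv, norm_pow]
    rw [Real.norm_eq_abs, Real.norm_eq_abs, abs_neg, abs_of_pos hK]
    have hB : |(x^3 - 3/2*x^2 + 1/2*x)/6| ≤ 1/108 := by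
      rw [abs_div]
      rw [show |(6:ℝ)| = 6 by norm_num]
      have := B3_bound hx0.le hx1
      linarith
    have habs : ‖z + (t:ℝ)‖ = ‖z + (t:ℝ)‖ := rfl
    have hpow : r ^ m * (r ^ 2 + t ^ 2) ^ 2 ≤ ‖z + (t:ℝ)‖ ^ (m + 4) := by
      have h1 : r ≤ ‖z + (t:ℝ)‖ := key_r_le hre ht
      have h2 : r ^ 2 + t ^ 2 ≤ ‖z + (t:ℝ)‖ ^ 2 := key_sq hre ht
      have e2 : ‖z + (t:ℝ)‖ ^ (m + 4) = ‖z + (t:ℝ)‖ ^ m * (‖z + (t:ℝ)‖ ^ 2) ^ 2 := by ring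
      rw [e2]
      apply mul_le_mul (pow_le_pow_left₀ hr.le h1 m)
        (pow_le_pow_left₀ (by positivity) h2 2) (by positivity) (by positivity)
    have hinv : (‖z + (t:ℝ)‖ ^ (m + 4))⁻¹ ≤ (r ^ m * (r ^ 2 + t ^ 2) ^ 2)⁻¹ :=
      inv_anti₀ (by positivity) hpow
    calc |(x^3 - 3/2*x^2 + 1/2*x)/6| * (K * (‖z + (t:ℝ)‖ ^ (m+4))⁻¹)
        ≤ (1/108) * (K * (r ^ m * (r ^ 2 + t ^ 2) ^ 2)⁻¹) := by
          exact mul_le_mul hB (mul_le_mul_of_nonneg_left hinv hK.le)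
            (by positivity) (by norm_num)
      _ = g t := by
          simp only [hgdef, div_eq_mul_inv, mul_inv]
          ring
      _ = g ((k:ℝ) + x) := by rw [htdef]
  refine step1.trans ?_
  rw [intervalIntegral.integral_comp_add_left (fun t => g t) (k:ℝ)]
  rw [add_zero]
  have hnn : 0 ≤ ∫ x in (k:ℝ)..((k:ℝ)+1), g x :=
    intervalIntegral.integral_nonneg (by linarith) (fun u _ => by positivity)
  rw [_root_.abs_of_nonneg hnn]
  exact le_of_eq (by simp only [hgdef, hKdef])

lemma F_hasDeriv {r : ℝ} (hr : 0 < r) (t : ℝ) :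
    HasDerivAt (fun t : ℝ => t/(2*r^2*(r^2+t^2)) + Real.arctan (t/r)/(2*r^3))
      (((r^2+t^2)^2)⁻¹) t := by
  have hd : (0:ℝ) < r^2 + t^2 := by positivity
  have h1 : HasDerivAt (fun t : ℝ => t/(2*r^2*(r^2+t^2)))
      ((1*(2*r^2*(r^2+t^2)) - t*(2*r^2*(2*t)))/(2*r^2*(r^2+t^2))^2) t := by
    have hden : HasDerivAt (fun t : ℝ => 2*r^2*(r^2+t^2)) (2*r^2*(2*t)) t := by
      have : HasDerivAt (fun t : ℝ => r^2+t^2) (2*t) t := by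
        simpa using ((hasDerivAt_pow 2 t).const_add (r^2))
      exact this.const_mul _
    exact (hasDerivAt_id t).div hden (by positivity)
  have h2 : HasDerivAt (fun t : ℝ => Real.arctan (t/r)/(2*r^3))
      ((1/(1+(t/r)^2) * (1/r))/(2*r^3)) t := by
    have ha : HasDerivAt (fun t : ℝ => Real.arctan (t/r)) (1/(1+(t/r)^2) * (1/r)) t := by
      have hdiv : HasDerivAt (fun t : ℝ => t/r) (1/r) t := by
        simpa [one_div] using (hasDerivAt_id t).div_const r
      exact (Real.hasDerivAt_arctan (t/r)).comp t hdiv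
    exact ha.div_const _
  have := h1.add h2
  refine this.congr_deriv (Eq.symm ?_)
  have h1p : (1 + (t/r)^2) = (r^2+t^2)/r^2 := by field_simp
  rw [h1p]
  field_simp
  ring

lemma F_le {r : ℝ} (hr : 0 < r) (N : ℝ) :
    N/(2*r^2*(r^2+N^2)) + Real.arctan (N/r)/(2*r^3) ≤ Real.pi/(4*r^3) := by
  set F : ℝ → ℝ := fun t => t/(2*r^2*(r^2+t^2)) + Real.arctan (t/r)/(2*r^3) with hF
  have hmono : Monotone F := by
    apply monotone_of_deriv_nonneg
    · exact fun t => (F_hasDeriv hr t).differentiableAt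
    · intro t
      rw [(F_hasDeriv hr t).deriv]
      positivity
  have htend : Filter.Tendsto F Filter.atTop (nhds (Real.pi/(4*r^3))) := by
    have t1 : Filter.Tendsto (fun t : ℝ => t/(2*r^2*(r^2+t^2))) Filter.atTop (nhds 0) := by
      apply squeeze_zero' (g := fun t : ℝ => 1/(2*r^2*t))
      · filter_upwards [Filter.eventually_gt_atTop 0] with t ht
        positivity
      · filter_upwards [Filter.eventually_gt_atTop 0] with t ht
        rw [div_le_div_iff₀ (by positivity) (by positivity)]
        nlinarith [sq_nonneg r, sq_nonneg t]
      · have : Filter.Tendsto (fun t : ℝ => t⁻¹) Filter.atTop (nhds 0) := tendsto_inv_atTop_zero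
        have := this.const_mul (1/(2*r^2))
        simpa [one_div, mul_comm] using this
    have t2 : Filter.Tendsto (fun t : ℝ => Real.arctan (t/r)/(2*r^3)) Filter.atTop
        (nhds ((Real.pi/2)/(2*r^3))) := by
      apply Filter.Tendsto.div_const
      apply (tendsto_nhds_of_tendsto_nhdsWithin Real.tendsto_arctan_atTop).comp
      exact Filter.tendsto_id.atTop_div_const hr
    have := t1.add t2
    convert this using 2
    ring
  have := hmono.ge_of_tendsto htend N
  simpa [hF] using this

lemma sum_int_g0 {r : ℝ} (hr : 0 < r) (N : ℕ) :
    ∑ k ∈ Finset.range N, (∫ t in (k:ℝ)..((k:ℝ)+1), ((r^2+t^2)^2)⁻¹)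
      ≤ Real.pi/(4*r^3) := by
  have hcont : Continuous (fun t : ℝ => ((r^2+t^2)^2)⁻¹) := by
    apply Continuous.inv₀
    · fun_prop
    · intro t; positivity
  have hint : ∀ a b : ℝ, IntervalIntegrable (fun t : ℝ => ((r^2+t^2)^2)⁻¹)
      MeasureTheory.volume a b := fun a b => hcont.intervalIntegrable a b
  have hadj : ∑ k ∈ Finset.range N, (∫ t in (k:ℝ)..((k:ℝ)+1), ((r^2+t^2)^2)⁻¹)
      = ∫ t in (0:ℝ)..(N:ℝ), ((r^2+t^2)^2)⁻¹ := by
    have := intervalIntegral.sum_integral_adjacent_intervals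
      (a := fun k : ℕ => (k:ℝ)) (f := fun t : ℝ => ((r^2+t^2)^2)⁻¹) (n := N)
      (fun k _ => hint _ _)
    simp only [Nat.cast_zero] at this
    rw [← this]
    apply Finset.sum_congr rfl
    intro k _
    congr 1
    push_cast
    ring
  rw [hadj]
  have hftc : ∫ t in (0:ℝ)..(N:ℝ), ((r^2+t^2)^2)⁻¹
      = ((N:ℝ)/(2*r^2*(r^2+(N:ℝ)^2)) + Real.arctan ((N:ℝ)/r)/(2*r^3))
        - ((0:ℝ)/(2*r^2*(r^2+(0:ℝ)^2)) + Real.arctan ((0:ℝ)/r)/(2*r^3)) := by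
    exact intervalIntegral.integral_eq_sub_of_hasDerivAt
      (fun t _ => F_hasDeriv hr t) (hint _ _)
  rw [hftc]
  have h0 : ((0:ℝ)/(2*r^2*(r^2+(0:ℝ)^2)) + Real.arctan ((0:ℝ)/r)/(2*r^3)) = 0 := by
    simp [Real.arctan_zero]
  rw [h0, sub_zero]
  exact F_le hr (N:ℝ)

lemma tendsto_inv_pow_zero {z : ℂ} (hre : 0 ≤ z.re) {j : ℕ} (hj : 1 ≤ j) :
    Filter.Tendsto (fun k : ℕ => ((z + (k:ℂ)) ^ j)⁻¹) Filter.atTop (nhds 0) := by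
  rw [tendsto_zero_iff_norm_tendsto_zero]
  apply squeeze_zero' (g := fun k : ℕ => ((k:ℝ))⁻¹)
  · filter_upwards with k; positivity
  · filter_upwards [Filter.eventually_ge_atTop 1] with k hk
    have hk1 : (1:ℝ) ≤ (k:ℝ) := by exact_mod_cast hk
    have habs : (k:ℝ) ≤ ‖z + (k:ℂ)‖ := by
      simpa using key_t_le hre (t := (k:ℝ)) (by positivity)
    rw [norm_inv, norm_pow]
    apply inv_anti₀ (by positivity)
    calc (k:ℝ) = (k:ℝ)^1 := (pow_one _).symm
      _ ≤ (k:ℝ)^j := pow_le_pow_right₀ hk1 hj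
      _ ≤ ‖z + (k:ℂ)‖^j := pow_le_pow_left₀ (by positivity) habs j
  · exact tendsto_inv_atTop_zero.comp tendsto_natCast_atTop_atTop

set_option maxHeartbeats 1000000 in
theorem euler_maclaurin_polygamma' (m : ℕ) (hm : 1 ≤ m) (z : ℂ) (hre : 0 ≤ z.re)
    (hz : z ≠ 0) :
    ‖(∑' k : ℕ, 1 / (z + k) ^ (m+1)) - 1 / ((m : ℂ) * z ^ m) - 1 / (2 * z ^ (m + 1))
        - ((m : ℂ) + 1) / (12 * z ^ (m + 2))‖
      ≤ ((m : ℝ) + 1) * ((m : ℝ) + 2) * ((m : ℝ) + 3) / (120 * ‖z‖ ^ (m + 3)) := by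
  have hr : 0 < ‖z‖ := norm_pos_iff.mpr hz
  have hm0 : ((m:ℂ)) ≠ 0 := by exact_mod_cast Nat.cast_ne_zero.mpr (by omega)
  have hwk : ∀ (k : ℕ) (x : ℝ), 0 ≤ x → z + (k:ℂ) + x ≠ 0 := by
    intro k x hx
    have e : z + (k:ℂ) + x = z + (((k:ℝ) + x : ℝ) : ℂ) := by push_cast; ring
    rw [e]; exact key_ne hre hz (by positivity)
  -- sequences
  let A : ℕ → ℂ := fun k => ((z + (k:ℂ)) ^ (m+1))⁻¹
  let P : ℕ → ℂ := fun k => -(1/(m:ℂ)) * ((z + (k:ℂ)) ^ m)⁻¹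
  let D : ℕ → ℂ := fun k => -((m:ℂ)+1) * ((z + (k:ℂ)) ^ (m+2))⁻¹
  let T : ℕ → ℂ := fun k =>
    A k - (P (k+1) - P k) - (A k - A (k+1))/2 + (D k - D (k+1))/12
  -- summability
  have SA : Summable A := summable_aux hre (by omega)
  have SA' : Summable (fun k => A (k+1)) := (summable_nat_add_iff 1).mpr SA
  have SD : Summable D := (summable_aux hre (by omega)).mul_left _
  have SD' : Summable (fun k => D (k+1)) := (summable_nat_add_iff 1).mpr SD
  -- per-interval identity
  have hTk : ∀ k : ℕ, T k = ∫ x in (0:ℝ)..1, (((x:ℂ)^3 - 3/2*(x:ℂ)^2 + 1/2*(x:ℂ))/6) *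
      (-(((m:ℂ)+1)*((m:ℂ)+2)*((m:ℂ)+3)) * ((z + (k:ℂ) + x) ^ (m+4))⁻¹) := by
    intro k
    have := interval_key m hm (z + (k:ℂ)) (hwk k)
    show A k - (P (k+1) - P k) - (A k - A (k+1))/2 + (D k - D (k+1))/12 = _
    simp only [A, P, D, Nat.cast_add, Nat.cast_one, ← add_assoc]
    exact this
  -- norm bound on T and summability of norms
  have hnormT : ∀ (N : ℕ), ∑ k ∈ Finset.range N, ‖T k‖
      ≤ ((m:ℝ)+1)*((m:ℝ)+2)*((m:ℝ)+3) / (120 * ‖z‖ ^ (m + 3)) := by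
    intro N
    have step : ∀ k : ℕ, ‖T k‖ ≤ (((m:ℝ)+1)*((m:ℝ)+2)*((m:ℝ)+3)/(108 * ‖z‖ ^ m)) *
        ∫ t in (k:ℝ)..((k:ℝ)+1), ((‖z‖ ^ 2 + t ^ 2) ^ 2)⁻¹ := by
      intro k
      rw [hTk k]
      refine (Ek_bound m hre hz k).trans ?_
      rw [← intervalIntegral.integral_const_mul]
    have hsum : ∑ k ∈ Finset.range N, ‖T k‖
        ≤ (((m:ℝ)+1)*((m:ℝ)+2)*((m:ℝ)+3)/(108 * ‖z‖ ^ m)) *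
          ∑ k ∈ Finset.range N, (∫ t in (k:ℝ)..((k:ℝ)+1),
            ((‖z‖ ^ 2 + t ^ 2) ^ 2)⁻¹) := by
      rw [Finset.mul_sum]
      exact Finset.sum_le_sum fun k _ => step k
    refine hsum.trans ?_
    have h2 := sum_int_g0 hr N
    have hc : (0:ℝ) ≤ ((m:ℝ)+1)*((m:ℝ)+2)*((m:ℝ)+3)/(108 * ‖z‖ ^ m) := by positivity
    refine (mul_le_mul_of_nonneg_left h2 hc).trans ?_
    rw [pow_add]
    rw [div_mul_div_comm, div_le_div_iff₀ (by positivity) (by positivity)]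
    have hpi : Real.pi ≤ 3.6 := by
      have := Real.pi_lt_d2
      linarith
    have hK' : (0:ℝ) ≤ ((m:ℝ)+1)*((m:ℝ)+2)*((m:ℝ)+3) * (‖z‖ ^ m * ‖z‖ ^ 3) := by
      positivity
    nlinarith [mul_le_mul_of_nonneg_right hpi hK']
  have hTnorm_summable : Summable (fun k => ‖T k‖) :=
    summable_of_sum_range_le (fun k => norm_nonneg _) hnormT
  have ST : Summable T := Summable.of_norm hTnorm_summable
  -- t2 summable
  have St2 : Summable (fun k => P (k+1) - P k) := by
    have e : (fun k => P (k+1) - P k) = fun k =>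
        A k - T k - (A k - A (k+1))/2 + (D k - D (k+1))/12 := by
      funext k
      show P (k+1) - P k = A k - T k - _ + _
      show P (k+1) - P k = A k -
        (A k - (P (k+1) - P k) - (A k - A (k+1))/2 + (D k - D (k+1))/12) - _ + _
      ring
    rw [e]
    exact (((SA.sub ST).sub ((SA.sub SA').div_const 2)).add ((SD.sub SD').div_const 12))
  -- HasSums
  have hPz : Filter.Tendsto P Filter.atTop (nhds 0) := by
    have h := (tendsto_inv_pow_zero hre (j := m) hm).const_mul (-(1/(m:ℂ)))
    rw [mul_zero] at h
    exact h
  have hAz : Filter.Tendsto A Filter.atTop (nhds 0) :=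
    tendsto_inv_pow_zero hre (j := m+1) (by omega)
  have hDz : Filter.Tendsto D Filter.atTop (nhds 0) := by
    have h := (tendsto_inv_pow_zero hre (j := m+2) (by omega)).const_mul (-((m:ℂ)+1))
    rw [mul_zero] at h
    exact h
  have ht2 : HasSum (fun k => P (k+1) - P k) (-(P 0)) := by
    rw [hasSum_iff_tendsto_nat_of_summable_norm (summable_norm_iff.mpr St2)]
    have e : ∀ n : ℕ, ∑ i ∈ Finset.range n, (P (i+1) - P i) = P n - P 0 :=
      fun n => Finset.sum_range_sub P n
    simp only [e]
    simpa using hPz.sub tendsto_const_nhds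
  have hhalf : HasSum (fun k => (A k - A (k+1))/2) (A 0 / 2) :=
    (tele_hasSum hAz (summable_norm_iff.mpr (SA.sub SA'))).div_const 2
  have htw : HasSum (fun k => (D k - D (k+1))/12) (D 0 / 12) :=
    (tele_hasSum hDz (summable_norm_iff.mpr (SD.sub SD'))).div_const 12
  have hS : HasSum A (∑' k : ℕ, 1 / (z + k) ^ (m+1)) := by
    have e : ∀ k : ℕ, 1 / (z + (k:ℂ)) ^ (m+1) = A k := fun k => one_div _
    rw [tsum_congr e]
    exact SA.hasSum
  have hTsum : HasSum T ((∑' k : ℕ, 1 / (z + k) ^ (m+1)) - (-(P 0)) - A 0 / 2 + D 0 / 12) :=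
    ((hS.sub ht2).sub hhalf).add htw
  have hval : (∑' k : ℕ, 1 / (z + k) ^ (m+1)) - 1 / ((m : ℂ) * z ^ m) - 1 / (2 * z ^ (m + 1))
      - ((m : ℂ) + 1) / (12 * z ^ (m + 2))
      = (∑' k : ℕ, 1 / (z + k) ^ (m+1)) - (-(P 0)) - A 0 / 2 + D 0 / 12 := by
    have e0 : ((0:ℕ):ℂ) = 0 := by norm_num
    show _ = _ - (-(-(1/(m:ℂ)) * ((z + ((0:ℕ):ℂ)) ^ m)⁻¹)) -
      ((z + ((0:ℕ):ℂ)) ^ (m+1))⁻¹ / 2 + (-((m:ℂ)+1) * ((z + ((0:ℕ):ℂ)) ^ (m+2))⁻¹) / 12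
    rw [e0, add_zero]
    have h1 : z ^ m ≠ 0 := pow_ne_zero _ hz
    have h2 : z ^ (m+1) ≠ 0 := pow_ne_zero _ hz
    have h3 : z ^ (m+2) ≠ 0 := pow_ne_zero _ hz
    field_simp
    ring
  rw [hval]
  have habs : ‖(∑' k : ℕ, 1 / (z + k) ^ (m+1)) - (-(P 0)) - A 0 / 2 + D 0 / 12‖
      = ‖(∑' k : ℕ, 1 / (z + k) ^ (m+1)) - (-(P 0)) - A 0 / 2 + D 0 / 12‖ := rfl
  rw [habs, ← hTsum.tsum_eq]
  exact (norm_tsum_le_tsum_norm hTnorm_summable).trans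
    (Real.tsum_le_of_sum_range_le (fun k => norm_nonneg _) hnormT)

end EulerMaclaurinAux

/-- Euler–Maclaurin expansion of the polygamma function with explicit remainder bound:
for `m ≥ 1` and `Re z ≥ 0`, `z ≠ 0`,
`|S_{m+1}(z) − 1/(m z^m) − 1/(2 z^{m+1}) − (m+1)/(12 z^{m+2})|
  ≤ (m+1)(m+2)(m+3)/(120 |z|^{m+3})`. -/
theorem euler_maclaurin_polygamma (m : ℕ) (hm : 1 ≤ m) (z : ℂ) (hre : 0 ≤ z.re)
    (hz : z ≠ 0) :
    ‖S (m + 1) z - 1 / ((m : ℂ) * z ^ m) - 1 / (2 * z ^ (m + 1))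
        - ((m : ℂ) + 1) / (12 * z ^ (m + 2))‖
      ≤ ((m : ℝ) + 1) * ((m : ℝ) + 2) * ((m : ℝ) + 3) / (120 * ‖z‖ ^ (m + 3)) := by
  have h := euler_maclaurin_polygamma' m hm z hre hz
  unfold S
  exact h
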